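/- The HP theory does not satisfy the principle of presumption. Concretely, in the Jane–Julie model M₂, J₁ is a preempted cause of (B = 0) with respect to HP (it is a putative cause but J₁ ∉ HP(M₂,(B = 0))), yet there exists M' ∈ ℳ(HP(M₂,(B = 0))) with S_{M'}(J₁) = S_{M₂}(J₁) and J₁ ∈ ButFor(M',(B = 0)) such that every variable W ∉ HP(M₂,(B = 0)) satisfies S_{M₂}(W) = S_{M'}(W). -/

import Mathlib

namespace HPFramework

open Classical

/-- A causal model in the Halpern–Pearl framework, over exogenous variables `U`,
endogenous variables `V` and value domain `D`.  It packages the causal structure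
(the finite ranges of the variables), the DAG (the well-founded `parent` relation),
the structural equations `F` (each depending only on the exogenous variables and the
parents, and taking values in the range), and the context `ctx`. -/
structure CausalModel (U V D : Type) [Fintype U] [Fintype V] where
  rangeU : U → Finset D
  range : V → Finset D
  rangeU_nonempty : ∀ W, (rangeU W).Nonempty
  range_nonempty : ∀ X, (range X).Nonempty
  parent : V → V → Prop
  acyclic : WellFounded parent
  F : V → (U → D) → (V → D) → D
  F_parents : ∀ X u (a b : V → D), (∀ Y, parent Y X → a Y = b Y) → F X u a = F X u b
  F_range : ∀ X u v, (∀ W, u W ∈ rangeU W) → (∀ Y, v Y ∈ range Y) → F X u v ∈ range X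
  ctx : U → D
  ctx_range : ∀ W, ctx W ∈ rangeU W

variable {U V D : Type} [Fintype U] [Fintype V]

/-- The unique solution `S_M` of the system of structural equations of `M`. -/
noncomputable def sol (M : CausalModel U V D) : V → D :=
  WellFounded.fix M.acyclic fun X ih =>
    M.F X M.ctx fun Y => if h : M.parent Y X then ih Y h else (M.range_nonempty Y).choose

/-- A partial, range-permitted assignment of values to the endogenous variables of `M`. -/
def PAssign (M : CausalModel U V D) : Type :=
  {g : V → Option D // ∀ X d, g X = some d → d ∈ M.range X}

/-- The intervened model `M_[X⃗ ← x⃗]`: the equation of each variable assigned a value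
by `g` is replaced by the corresponding constant; other equations are unchanged. -/
noncomputable def intervene (M : CausalModel U V D) (g : PAssign M) : CausalModel U V D where
  rangeU := M.rangeU
  range := M.range
  rangeU_nonempty := M.rangeU_nonempty
  range_nonempty := M.range_nonempty
  parent := M.parent
  acyclic := M.acyclic
  F := fun X u v => (g.1 X).getD (M.F X u v)
  F_parents := by
    intro X u a b hab
    cases h : g.1 X with
    | none => simp only [h, Option.getD_none]; exact M.F_parents X u a b hab
    | some d => simp [h]
  F_range := by
    intro X u v hu hv
    cases h : g.1 X with
    | none => simpa [h] using M.F_range X u v hu hv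
    | some d => simpa [h] using g.2 X d h
  ctx := M.ctx
  ctx_range := M.ctx_range

/-- Basic formulas: Boolean combinations of atoms `(X = x)` with `X` endogenous. -/
inductive BForm (V D : Type) : Type where
  | atom : V → D → BForm V D
  | not : BForm V D → BForm V D
  | and : BForm V D → BForm V D → BForm V D

/-- Evaluation of a basic formula at an assignment of values to the endogenous variables. -/
def BForm.eval (s : V → D) : BForm V D → Prop
  | .atom X x => s X = x
  | .not φ => ¬ φ.eval s
  | .and φ ψ => φ.eval s ∧ ψ.eval s

/-- `M ⊨ φ` for a basic formula `φ`, evaluated via the solution `S_M`. -/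
def Sat (M : CausalModel U V D) (φ : BForm V D) : Prop := (BForm.eval (sol M)) φ

variable [DecidableEq V]

/-- The single intervention `[X ← x]` (with `x` in the range of `X`). -/
noncomputable def single (M : CausalModel U V D) (X : V) (x : D)
    (hx : x ∈ M.range X) : PAssign M :=
  ⟨fun Y => if Y = X then some x else none, by
    intro Y d h
    simp only at h
    split at h
    next heq => cases h; exact heq ▸ hx
    next => cases h⟩

/-- The but-for theory: `X ∈ ButFor(M,φ)` iff `M ⊨ φ` and there is `x ∈ R(X)` with
`M ⊨ [X ← x] ¬φ`. -/
noncomputable def ButFor (M : CausalModel U V D) (φ : BForm V D) : Set V :=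
  {X | Sat M φ ∧ ∃ x, ∃ hx : x ∈ M.range X, ¬ Sat (intervene M (single M X x hx)) φ}

/-- `ℳ(A)` (relative to `M`): all models obtained from `M` by a (possibly partial)
range-permitted assignment to the variables in `A`, while any assigned variable outside
`A` is held fixed at its actual value in `M`. -/
def MSet (M : CausalModel U V D) (A : Set V) : Set (CausalModel U V D) :=
  {M' | ∃ g : PAssign M,
    (∀ X, X ∉ A → ∀ d, g.1 X = some d → d = sol M X) ∧ M' = intervene M g}

/-- A causal theory: a map assigning to every model and basic formula a set of
endogenous variables (the causes). -/
def CausalTheory (U V D : Type) [Fintype U] [Fintype V] : Type _ :=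
  CausalModel U V D → BForm V D → Set V

/-- `X` is a putative cause of `φ` in `M` (w.r.t. the theory `C`). -/
noncomputable def Putative (C : CausalTheory U V D) (M : CausalModel U V D)
    (φ : BForm V D) (X : V) : Prop :=
  ∃ M' ∈ MSet M (C M φ), sol M X = sol M' X ∧ X ∈ ButFor M' φ

/-- `X` is a preempted cause of `φ` in `M` (w.r.t. `C`): putative but not a cause. -/
noncomputable def Preempted (C : CausalTheory U V D) (M : CausalModel U V D)
    (φ : BForm V D) (X : V) : Prop :=
  Putative C M φ X ∧ X ∉ C M φ

/-- A theory is similarity-based if it recognises at least all but-for causes and at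
most all putative causes. -/
noncomputable def SimilarityBased (C : CausalTheory U V D) : Prop :=
  ∀ M φ, ButFor M φ ⊆ C M φ ∧ ∀ X ∈ C M φ, Putative C M φ X

/-- The principle of presumption. -/
noncomputable def Presumption (C : CausalTheory U V D) : Prop :=
  ∀ M φ X, Preempted C M φ X →
    ∀ M' ∈ MSet M (C M φ), sol M' X = sol M X → X ∈ ButFor M' φ →
      ∃ W, W ∉ C M φ ∧ sol M W ≠ sol M' W

/-- Empirical causal theories (fixed-point characterisation). -/
noncomputable def Empirical (C : CausalTheory U V D) : Prop :=
  ∀ M φ X, X ∈ C M φ ↔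
    ∃ M' ∈ MSet M (C M φ), sol M X = sol M' X ∧ X ∈ ButFor M' φ ∧
      ∀ W, W ∉ C M φ → sol M W = sol M' W

/-- The relation `M₁ ⊑_{C,φ} M₂`. -/
noncomputable def CRel (C : CausalTheory U V D) (φ : BForm V D)
    (M₁ M₂ : CausalModel U V D) : Prop :=
  M₂ ∈ MSet M₁ (C M₁ φ) ∧ Sat M₂ φ ∧ ∀ X, X ∉ C M₁ φ → sol M₁ X = sol M₂ X

/-- The closure property. -/
noncomputable def Closure (C : CausalTheory U V D) : Prop :=
  ∀ (M : CausalModel U V D) (φ : BForm V D) M', CRel C φ M M' → C M' φ ⊆ C M φ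

/-- AC1 and AC2 of Halpern's (2015) definition, for the set `Xs`: `M ⊨ φ` and there is
an intervention assigning (range-permitted) values to all of `Xs` and holding any other
assigned variable fixed at its actual value, after which `¬φ` holds. -/
noncomputable def AC12 (M : CausalModel U V D) (φ : BForm V D) (Xs : Set V) : Prop :=
  Sat M φ ∧ ∃ g : PAssign M,
    (∀ X ∈ Xs, (g.1 X).isSome) ∧
    (∀ X, X ∉ Xs → ∀ d, g.1 X = some d → d = sol M X) ∧
    ¬ Sat (intervene M g) φ

/-- `Xs` is a complex cause of `φ` in `M`: AC1, AC2 and the minimality condition AC3. -/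
noncomputable def ComplexCause (M : CausalModel U V D) (φ : BForm V D) (Xs : Set V) : Prop :=
  AC12 M φ Xs ∧ ∀ Ys : Set V, Ys ⊂ Xs → ¬ AC12 M φ Ys

/-- The HP theory: `X ∈ HP(M,φ)` iff `X` belongs to some complex cause of `φ` in `M`. -/
noncomputable def HP : CausalTheory U V D := fun M φ =>
  {X | ∃ Xs : Set V, X ∈ Xs ∧ ComplexCause M φ Xs}

/-- Helper: a relation admitting a strictly monotone rank function is well-founded. -/
theorem wf_of_rank {α : Type} (r : α → α → Prop) (rk : α → ℕ)
    (h : ∀ a b, r a b → rk a < rk b) : WellFounded r :=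
  Subrelation.wf (fun {a b} hr => h a b hr) (InvImage.wf rk Nat.lt_wfRel.wf)



/-- The endogenous variables of the Jane–Julie models. -/
inductive JVar : Type
  | J1 | J2 | B
deriving DecidableEq

instance : Fintype JVar := ⟨{JVar.J1, JVar.J2, JVar.B}, by intro x; cases x <;> simp⟩

open JVar

/-- The Jane–Julie model `M₂`: ranges `R(U₁) = R(J₁) = {0, 1/2}`,
`R(U₂) = R(J₂) = {0, 1/2, 1}`, `R(B) = {0, 1}`; equations `J₁ = U₁`, `J₂ = U₂`,
`B = 0` if `J₁ + J₂ ≥ 1` and `B = 1` otherwise; context `u = (1/2, 1)`. -/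
noncomputable def M2 : CausalModel (Fin 2) JVar ℚ where
  rangeU := fun i => if i = 0 then {0, 1/2} else {0, 1/2, 1}
  range := fun X => match X with
    | J1 => {0, 1/2}
    | J2 => {0, 1/2, 1}
    | B => {0, 1}
  rangeU_nonempty := by intro W; (try dsimp only); split <;> exact ⟨0, by simp⟩
  range_nonempty := by intro X; cases X <;> exact ⟨0, by simp⟩
  parent := fun Y X => (Y = J1 ∨ Y = J2) ∧ X = B
  acyclic := wf_of_rank _ (fun X => match X with | B => 1 | _ => 0)
    (by rintro a b ⟨h1, rfl⟩; rcases h1 with rfl | rfl <;> simp)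
  F := fun X u v => match X with
    | J1 => u 0
    | J2 => u 1
    | B => if 1 ≤ v J1 + v J2 then 0 else 1
  F_parents := by
    intro X u a b hab
    cases X with
    | J1 => rfl
    | J2 => rfl
    | B =>
      show (if 1 ≤ a J1 + a J2 then (0 : ℚ) else 1) = (if 1 ≤ b J1 + b J2 then (0 : ℚ) else 1)
      rw [hab J1 ⟨Or.inl rfl, rfl⟩, hab J2 ⟨Or.inr rfl, rfl⟩]
  F_range := by
    intro X u v hu hv
    cases X with
    | J1 => simpa using hu 0
    | J2 => simpa using hu 1
    | B =>
      show (if 1 ≤ v J1 + v J2 then (0 : ℚ) else 1) ∈ ({0, 1} : Finset ℚ)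
      split <;> simp
  ctx := fun i => if i = 0 then 1/2 else 1
  ctx_range := by intro W; fin_cases W <;> simp

/-- The basic formula `(B = 0)`. -/
noncomputable def φB : BForm JVar ℚ := .atom B 0


/- ===== auxiliary lemmas ===== -/

theorem sol_fix (M : CausalModel U V D) (X : V) : sol M X = M.F X M.ctx (sol M) := by
  conv_lhs => rw [sol, WellFounded.fix_eq]
  exact M.F_parents X M.ctx _ _ (fun Y h => by rw [dif_pos h]; rfl)

lemma sol_M2_J1 : sol M2 J1 = 1/2 := by
  rw [sol_fix]; norm_num [M2]

lemma sol_M2_J2 : sol M2 J2 = 1 := by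
  rw [sol_fix]; norm_num [M2]

lemma sol_M2_B : sol M2 B = 0 := by
  rw [sol_fix]
  show (if (1:ℚ) ≤ sol M2 J1 + sol M2 J2 then 0 else 1) = 0
  rw [sol_M2_J1, sol_M2_J2]; norm_num

lemma sat_M2 : Sat M2 φB := sol_M2_B

lemma sol_int_J1 (g : PAssign M2) : sol (intervene M2 g) J1 = (g.1 J1).getD (1/2) := by
  rw [sol_fix]
  show (g.1 J1).getD (M2.ctx 0) = _
  norm_num [M2]

lemma sol_int_J2 (g : PAssign M2) : sol (intervene M2 g) J2 = (g.1 J2).getD 1 := by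
  rw [sol_fix]
  show (g.1 J2).getD (M2.ctx 1) = _
  norm_num [M2]

lemma sol_int_B (g : PAssign M2) : sol (intervene M2 g) B =
    (g.1 B).getD (if 1 ≤ sol (intervene M2 g) J1 + sol (intervene M2 g) J2 then 0 else 1) := by
  conv_lhs => rw [sol_fix]
  rfl

lemma range_J1 (g : PAssign M2) {d : ℚ} (h : g.1 J1 = some d) : d = 0 ∨ d = 1/2 := by
  have := g.2 J1 d h
  simpa [M2] using this

/-- If `g` holds `J2` and `B` at actual-or-unassigned values, `φB` stays satisfied. -/
lemma sat_of_fix (g : PAssign M2) (hJ2 : ∀ d, g.1 J2 = some d → d = 1)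
    (hB : ∀ d, g.1 B = some d → d = 0) : Sat (intervene M2 g) φB := by
  show sol (intervene M2 g) B = 0
  rw [sol_int_B]
  cases hgB : g.1 B with
  | some d => simpa using hB d hgB
  | none =>
    have hJ2v : sol (intervene M2 g) J2 = 1 := by
      rw [sol_int_J2]
      cases hg : g.1 J2 with
      | some d => simpa using hJ2 d hg
      | none => rfl
    have hJ1v : (0:ℚ) ≤ sol (intervene M2 g) J1 := by
      rw [sol_int_J1]
      cases hg : g.1 J1 with
      | some d => rcases range_J1 g hg with rfl | rfl <;> norm_num
      | none => norm_num
    rw [hJ2v]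
    simp only [Option.getD_none]
    rw [if_pos (by linarith)]

lemma not_AC12_empty : ¬ AC12 M2 φB (∅ : Set JVar) := by
  rintro ⟨-, g, -, hfix, hns⟩
  exact hns (sat_of_fix g
    (fun d hd => (hfix J2 (by simp) d hd).trans sol_M2_J2)
    (fun d hd => (hfix B (by simp) d hd).trans sol_M2_B))

lemma half_mem_rangeJ2 : (1/2 : ℚ) ∈ M2.range J2 := by norm_num [M2]

lemma zero_mem_rangeJ2 : (0 : ℚ) ∈ M2.range J2 := by norm_num [M2]

lemma one_mem_rangeB : (1 : ℚ) ∈ M2.range B := by norm_num [M2]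

lemma single_eval (M : CausalModel U V D) [DecidableEq V] (X : V) (x : D) (hx : x ∈ M.range X)
    (Y : V) : (single M X x hx).1 Y = if Y = X then some x else none := rfl

lemma AC12_J2 : AC12 M2 φB {J2} := by
  refine ⟨sat_M2, single M2 J2 0 zero_mem_rangeJ2, ?_, ?_, ?_⟩
  · rintro X rfl; rfl
  · intro X hX d hd
    rw [single_eval] at hd
    split at hd
    · next h => exact absurd h (by simpa using hX)
    · cases hd
  · intro hs
    have : sol (intervene M2 (single M2 J2 0 zero_mem_rangeJ2)) B = 0 := hs
    rw [sol_int_B, sol_int_J1, sol_int_J2,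
      show (single M2 J2 0 zero_mem_rangeJ2).1 B = none from rfl,
      show (single M2 J2 0 zero_mem_rangeJ2).1 J1 = none from rfl,
      show (single M2 J2 0 zero_mem_rangeJ2).1 J2 = some 0 from rfl] at this
    norm_num at this

lemma AC12_B : AC12 M2 φB {B} := by
  refine ⟨sat_M2, single M2 B 1 one_mem_rangeB, ?_, ?_, ?_⟩
  · rintro X rfl; rfl
  · intro X hX d hd
    rw [single_eval] at hd
    split at hd
    · next h => exact absurd h (by simpa using hX)
    · cases hd
  · intro hs
    have : sol (intervene M2 (single M2 B 1 one_mem_rangeB)) B = 0 := hs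
    rw [sol_int_B,
      show (single M2 B 1 one_mem_rangeB).1 B = some 1 from rfl] at this
    norm_num at this

lemma cc_J2 : ComplexCause M2 φB {J2} := by
  refine ⟨AC12_J2, fun Ys hYs => ?_⟩
  rw [Set.ssubset_singleton_iff.mp hYs]
  exact not_AC12_empty

lemma cc_B : ComplexCause M2 φB {B} := by
  refine ⟨AC12_B, fun Ys hYs => ?_⟩
  rw [Set.ssubset_singleton_iff.mp hYs]
  exact not_AC12_empty

lemma J2_mem_HP : J2 ∈ HP M2 φB := ⟨{J2}, rfl, cc_J2⟩
lemma B_mem_HP : B ∈ HP M2 φB := ⟨{B}, rfl, cc_B⟩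

lemma J1_not_mem_HP : J1 ∉ HP M2 φB := by
  rintro ⟨Xs, hJ1, hAC12, hAC3⟩
  by_cases hJ2 : J2 ∈ Xs
  · exact hAC3 {J2} ⟨Set.singleton_subset_iff.2 hJ2,
      fun hsub => by simpa using hsub hJ1⟩ AC12_J2
  by_cases hB : B ∈ Xs
  · exact hAC3 {B} ⟨Set.singleton_subset_iff.2 hB,
      fun hsub => by simpa using hsub hJ1⟩ AC12_B
  -- Xs = {J1}; show AC12 fails for it
  obtain ⟨-, g, -, hfix, hns⟩ := hAC12
  exact hns (sat_of_fix g
    (fun d hd => (hfix J2 hJ2 d hd).trans sol_M2_J2)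
    (fun d hd => (hfix B hB d hd).trans sol_M2_B))

/-- The witness model `M' = M₂[J₂ ← 1/2]`. -/
noncomputable def gP : PAssign M2 := single M2 J2 (1/2) half_mem_rangeJ2

noncomputable def Mp : CausalModel (Fin 2) JVar ℚ := intervene M2 gP

lemma sol_Mp_J1 : sol Mp J1 = 1/2 := by
  rw [Mp, sol_int_J1]; rfl

lemma sol_Mp_J2 : sol Mp J2 = 1/2 := by
  rw [Mp, sol_int_J2]; rfl

lemma sol_Mp_B : sol Mp B = 0 := by
  rw [Mp, sol_int_B, ← Mp]
  rw [sol_Mp_J1, sol_Mp_J2]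
  rw [show gP.1 B = none from rfl]
  norm_num

lemma zero_mem_rangeJ1' : (0 : ℚ) ∈ Mp.range J1 := by
  show (0:ℚ) ∈ M2.range J1
  norm_num [M2]

noncomputable def Mpp : CausalModel (Fin 2) JVar ℚ := intervene Mp (single Mp J1 0 zero_mem_rangeJ1')

lemma sol_Mpp_J1 : sol Mpp J1 = 0 := by
  rw [Mpp, sol_fix]; rfl

lemma sol_Mpp_J2 : sol Mpp J2 = 1/2 := by
  rw [Mpp, sol_fix]; rfl

lemma sol_Mpp_B : sol Mpp B = 1 := by
  rw [Mpp, sol_fix]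
  show (if (1:ℚ) ≤ sol Mpp J1 + sol Mpp J2 then 0 else 1) = 1
  rw [sol_Mpp_J1, sol_Mpp_J2]
  norm_num

lemma butfor_Mp : J1 ∈ ButFor Mp φB := by
  refine ⟨sol_Mp_B, 0, zero_mem_rangeJ1', fun hs => ?_⟩
  have : sol Mpp B = 0 := hs
  rw [sol_Mpp_B] at this
  norm_num at this

lemma Mp_mem : Mp ∈ MSet M2 (HP M2 φB) := by
  refine ⟨gP, ?_, rfl⟩
  intro X hX d hd
  have : X = J2 := by
    by_contra hne
    rw [show gP.1 X = none from if_neg hne] at hd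
    cases hd
  exact absurd (this ▸ hX) (fun h => h J2_mem_HP)

lemma not_HP_same (W : JVar) (hW : W ∉ HP M2 φB) : sol M2 W = sol Mp W := by
  cases W with
  | J1 => rw [sol_M2_J1, sol_Mp_J1]
  | J2 => exact absurd J2_mem_HP hW
  | B => rw [sol_M2_B, sol_Mp_B]

/-- the HP theory does not satisfy the principle of presumption;
concretely, in `M₂`, `J₁` is a preempted cause of `(B = 0)` w.r.t. HP, yet there is
`M' ∈ ℳ(HP(M₂,(B=0)))` with `S_{M'}(J₁) = S_{M₂}(J₁)` and `J₁ ∈ ButFor(M',(B=0))`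
such that every `W ∉ HP(M₂,(B=0))` satisfies `S_{M₂}(W) = S_{M'}(W)`. -/
theorem hp_violates_presumption :
    ¬ Presumption (HP (U := Fin 2) (V := JVar) (D := ℚ)) ∧
    Preempted HP M2 φB J1 ∧
    ∃ M' ∈ MSet M2 (HP M2 φB), sol M' J1 = sol M2 J1 ∧ J1 ∈ ButFor M' φB ∧
      ∀ W, W ∉ HP M2 φB → sol M2 W = sol M' W := by
  have hsolJ1 : sol M2 J1 = sol Mp J1 := by rw [sol_M2_J1, sol_Mp_J1]
  have hpre : Preempted HP M2 φB J1 := ⟨⟨Mp, Mp_mem, hsolJ1, butfor_Mp⟩, J1_not_mem_HP⟩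
  refine ⟨?_, hpre, Mp, Mp_mem, hsolJ1.symm, butfor_Mp, not_HP_same⟩
  intro hP
  obtain ⟨W, hW, hne⟩ := hP M2 φB J1 hpre Mp Mp_mem hsolJ1.symm butfor_Mp
  exact hne (not_HP_same W hW)

end HPFramework
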